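/- For two Gaussian measures N(m_1, σ_1²) and N(m_2, σ_2²) on R with σ_1, σ_2 > 0, the squared 2-Wasserstein distance equals (m_1 − m_2)² + (σ_1 − σ_2)². -/

import Mathlib

open MeasureTheory ProbabilityTheory
open scoped ENNReal

open Filter Set Topology intervalIntegral
open scoped NNReal Topology

namespace W2aux

open Real

noncomputable def G (x : ℝ) : ℝ := rexp (-(2⁻¹ : ℝ) * x ^ 2)

lemma G_pos (x : ℝ) : 0 < G x := exp_pos _

lemma integrable_G : Integrable G := integrable_exp_neg_mul_sq (by norm_num)

lemma integral_G : ∫ x, G x = √(2 * π) := by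
  rw [show G = fun x => rexp (-(2⁻¹:ℝ) * x^2) from rfl, integral_gaussian]
  norm_num
  rw [mul_comm]

lemma integrable_xG : Integrable (fun x => x * G x) :=
  integrable_mul_exp_neg_mul_sq (by norm_num)

lemma integrable_sqG : Integrable (fun x => x ^ 2 * G x) := by
  have := integrable_rpow_mul_exp_neg_mul_sq (b := 2⁻¹) (by norm_num) (s := ((2:ℕ):ℝ))
    (by norm_num)
  simp only [Real.rpow_natCast] at this
  refine this.congr (Eventually.of_forall fun x => ?_)
  simp [G, neg_mul]

lemma tendsto_rpowG (s : ℝ) :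
    Tendsto (fun x : ℝ => |x| ^ s * G x) (cocompact ℝ) (𝓝 0) :=
  tendsto_rpow_abs_mul_exp_neg_mul_sq_cocompact (by norm_num) s

lemma tendsto_G : Tendsto G (cocompact ℝ) (𝓝 0) := by
  have := tendsto_rpowG 0
  simpa using this

lemma tendsto_xG : Tendsto (fun x => x * G x) (cocompact ℝ) (𝓝 0) := by
  refine squeeze_zero_norm (fun x => ?_) (tendsto_rpowG 1)
  rw [Real.norm_eq_abs, abs_mul, abs_of_pos (G_pos x), Real.rpow_one]

lemma hasDerivAt_negG (x : ℝ) : HasDerivAt (fun y => -G y) (x * G x) x := by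
  have h : HasDerivAt (fun y : ℝ => -(2⁻¹:ℝ) * y ^ 2) (-(2⁻¹:ℝ) * (2 * x ^ 1)) x :=
    (hasDerivAt_pow 2 x).const_mul _
  have := (h.exp).neg
  refine this.congr_deriv (Eq.symm ?_)
  show x * G x = -(G x * (-(2⁻¹:ℝ) * (2 * x ^ 1)))
  ring

lemma hasDerivAt_negxG (x : ℝ) :
    HasDerivAt (fun y => -y * G y) ((x ^ 2 - 1) * G x) x := by
  have h : HasDerivAt (fun y : ℝ => -(2⁻¹:ℝ) * y ^ 2) (-(2⁻¹:ℝ) * (2 * x ^ 1)) x :=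
    (hasDerivAt_pow 2 x).const_mul _
  have hG : HasDerivAt G (G x * (-(2⁻¹:ℝ) * (2 * x ^ 1))) x := h.exp
  have := ((hasDerivAt_id x).neg).mul hG
  refine this.congr_deriv (Eq.symm ?_)
  show (x ^ 2 - 1) * G x = -1 * G x + -x * (G x * (-(2⁻¹:ℝ) * (2 * x ^ 1)))
  ring

lemma atTop_le_cocompact : (atTop : Filter ℝ) ≤ cocompact ℝ := by
  rw [cocompact_eq_atBot_atTop]; exact le_sup_right

lemma atBot_le_cocompact : (atBot : Filter ℝ) ≤ cocompact ℝ := by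
  rw [cocompact_eq_atBot_atTop]; exact le_sup_left

lemma integral_xG : ∫ x, x * G x = 0 := by
  have hT : Tendsto (fun x => -G x) atTop (𝓝 0) := by
    simpa using (tendsto_G.mono_left atTop_le_cocompact).neg
  have hB : Tendsto (fun x => -G x) atBot (𝓝 0) := by
    simpa using (tendsto_G.mono_left atBot_le_cocompact).neg
  have h1 : ∫ x in Ioi (0:ℝ), x * G x = 0 - (-G 0) :=
    integral_Ioi_of_hasDerivAt_of_tendsto' (fun x _ => hasDerivAt_negG x)
      integrable_xG.integrableOn hT
  have h2 : ∫ x in Iic (0:ℝ), x * G x = -G 0 - 0 :=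
    integral_Iic_of_hasDerivAt_of_tendsto' (fun x _ => hasDerivAt_negG x)
      integrable_xG.integrableOn hB
  rw [← integral_Iic_add_Ioi (b := (0:ℝ)) integrable_xG.integrableOn
    integrable_xG.integrableOn, h1, h2]
  ring

lemma integral_sqG_sub : ∫ x, (x ^ 2 - 1) * G x = 0 := by
  have hint : Integrable (fun x => (x ^ 2 - 1) * G x) := by
    have := integrable_sqG.sub integrable_G
    refine this.congr (Eventually.of_forall fun x => ?_)
    simp only [Pi.sub_apply]
    ring
  have hT : Tendsto (fun x => -x * G x) atTop (𝓝 0) := by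
    simpa [neg_mul] using (tendsto_xG.mono_left atTop_le_cocompact).neg
  have hB : Tendsto (fun x => -x * G x) atBot (𝓝 0) := by
    simpa [neg_mul] using (tendsto_xG.mono_left atBot_le_cocompact).neg
  have h1 : ∫ x in Ioi (0:ℝ), (x ^ 2 - 1) * G x = 0 - (-0 * G 0) :=
    integral_Ioi_of_hasDerivAt_of_tendsto' (fun x _ => hasDerivAt_negxG x)
      hint.integrableOn hT
  have h2 : ∫ x in Iic (0:ℝ), (x ^ 2 - 1) * G x = -0 * G 0 - 0 :=
    integral_Iic_of_hasDerivAt_of_tendsto' (fun x _ => hasDerivAt_negxG x)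
      hint.integrableOn hB
  rw [← integral_Iic_add_Ioi (b := (0:ℝ)) hint.integrableOn hint.integrableOn, h1, h2]
  ring

lemma integral_sqG : ∫ x, x ^ 2 * G x = √(2 * π) := by
  have h := integral_sqG_sub
  have : ∫ x, (x ^ 2 - 1) * G x = (∫ x, x ^ 2 * G x) - ∫ x, G x := by
    rw [← integral_sub integrable_sqG integrable_G]
    congr 1; ext x; ring
  rw [this] at h
  rw [integral_G] at h
  linarith

noncomputable def c : ℝ := (√(2 * π))⁻¹

lemma c_pos : 0 < c := inv_pos.2 (Real.sqrt_pos.2 (by positivity))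

lemma pdf_std (x : ℝ) : gaussianPDFReal 0 1 x = c * G x := by
  simp only [gaussianPDFReal, G, NNReal.coe_one, mul_one, sub_zero, c]
  congr 2
  ring

lemma integral_std (f : ℝ → ℝ) :
    ∫ x, f x ∂(gaussianReal 0 1) = ∫ x, f x * (c * G x) := by
  rw [gaussianReal_of_var_ne_zero _ one_ne_zero]
  have h : gaussianPDF 0 1 = fun x => ((gaussianPDFReal 0 1 x).toNNReal : ℝ≥0∞) := rfl
  rw [h, integral_withDensity_eq_integral_smul ((measurable_gaussianPDFReal 0 1).real_toNNReal) f]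
  refine integral_congr_ae (Eventually.of_forall fun x => ?_)
  simp only [NNReal.smul_def, smul_eq_mul, pdf_std,
    Real.coe_toNNReal _ (mul_nonneg c_pos.le (G_pos x).le)]
  ring

lemma integrable_std_iff {f : ℝ → ℝ} :
    Integrable f (gaussianReal 0 1) ↔ Integrable (fun x => f x * (c * G x)) volume := by
  rw [gaussianReal_of_var_ne_zero _ one_ne_zero]
  have h : gaussianPDF 0 1 = fun x => ((gaussianPDFReal 0 1 x).toNNReal : ℝ≥0∞) := rfl
  rw [h, integrable_withDensity_iff_integrable_smul
    ((measurable_gaussianPDFReal 0 1).real_toNNReal)]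
  refine integrable_congr (Eventually.of_forall fun x => ?_)
  simp only [NNReal.smul_def, smul_eq_mul, pdf_std,
    Real.coe_toNNReal _ (mul_nonneg c_pos.le (G_pos x).le)]
  ring

lemma integrable_id_std : Integrable (fun x => x) (gaussianReal 0 1) := by
  rw [integrable_std_iff]
  refine (integrable_xG.const_mul c).congr (Eventually.of_forall fun x => ?_)
  ring

lemma integrable_sq_std : Integrable (fun x => x ^ 2) (gaussianReal 0 1) := by
  rw [integrable_std_iff]
  refine (integrable_sqG.const_mul c).congr (Eventually.of_forall fun x => ?_)
  ring

lemma integral_id_std : ∫ x, x ∂(gaussianReal 0 1) = 0 := by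
  rw [integral_std]
  have : ∀ x : ℝ, x * (c * G x) = c * (x * G x) := fun x => by ring
  simp_rw [this, MeasureTheory.integral_const_mul, integral_xG, mul_zero]

lemma sqrt_two_pi_pos : 0 < √(2 * π) := Real.sqrt_pos.2 (by positivity)

lemma integral_sq_std : ∫ x, x ^ 2 ∂(gaussianReal 0 1) = 1 := by
  rw [integral_std]
  have : ∀ x : ℝ, x ^ 2 * (c * G x) = c * (x ^ 2 * G x) := fun x => by ring
  simp_rw [this, MeasureTheory.integral_const_mul, integral_sqG, c]
  exact inv_mul_cancel₀ sqrt_two_pi_pos.ne'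

lemma memℒp_id_std : MemLp (fun x : ℝ => x) 2 (gaussianReal 0 1) :=
  (memLp_two_iff_integrable_sq aestronglyMeasurable_id).2 integrable_sq_std

/-- `N(m, σ²)` as an affine image of the standard Gaussian. -/
lemma gauss_eq_map (m σ : ℝ) (hσ : 0 < σ) :
    gaussianReal m (σ ^ 2).toNNReal
      = (gaussianReal 0 1).map (fun x => σ * x + m) := by
  have h1 : (gaussianReal 0 1).map (fun x => σ * x) = gaussianReal 0 (σ ^ 2).toNNReal := by
    rw [show (fun x : ℝ => σ * x) = (σ * ·) from rfl, gaussianReal_map_const_mul]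
    congr 1
    · ring
    · ext
      simp [Real.coe_toNNReal _ (sq_nonneg σ)]
  have h2 : ((gaussianReal 0 (σ ^ 2).toNNReal).map (· + m)) = gaussianReal m (σ ^ 2).toNNReal := by
    rw [gaussianReal_map_add_const]
    congr 1
    ring
  rw [← h2, ← h1, Measure.map_map (by fun_prop) (by fun_prop)]
  rfl

lemma integrable_affine_sq (a d : ℝ) :
    Integrable (fun x => (a * x + d) ^ 2) (gaussianReal 0 1) := by
  have h : Integrable (fun x : ℝ => a ^ 2 * x ^ 2 + (2 * a * d * x + d ^ 2)) (gaussianReal 0 1) :=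
    (integrable_sq_std.const_mul _).add ((integrable_id_std.const_mul _).add (integrable_const _))
  refine h.congr (Eventually.of_forall fun x => ?_)
  ring

lemma integral_affine_sq (a d : ℝ) :
    ∫ x, (a * x + d) ^ 2 ∂(gaussianReal 0 1) = a ^ 2 + d ^ 2 := by
  have e : (fun x : ℝ => (a * x + d) ^ 2)
      = fun x => a ^ 2 * x ^ 2 + (2 * a * d * x + d ^ 2) := by ext x; ring
  have h1 : Integrable (fun x : ℝ => a ^ 2 * x ^ 2) (gaussianReal 0 1) :=
    integrable_sq_std.const_mul _
  have h2 : Integrable (fun x : ℝ => 2 * a * d * x) (gaussianReal 0 1) :=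
    integrable_id_std.const_mul _
  have h3 : Integrable (fun _ : ℝ => d ^ 2) (gaussianReal 0 1) := integrable_const _
  have h4 : Integrable (fun x : ℝ => 2 * a * d * x + d ^ 2) (gaussianReal 0 1) := h2.add h3
  rw [e, integral_add h1 h4, integral_add h2 h3,
    MeasureTheory.integral_const_mul, MeasureTheory.integral_const_mul,
    integral_sq_std, integral_id_std]
  simp

lemma memℒp_sub_const (m σ : ℝ) (hσ : 0 < σ) :
    MemLp (fun x : ℝ => x - m) 2 (gaussianReal m (σ ^ 2).toNNReal) := by
  rw [gauss_eq_map m σ hσ,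
    memLp_map_measure_iff
      ((by fun_prop : Measurable fun x : ℝ => x - m).aestronglyMeasurable)
      (by fun_prop : Measurable fun x : ℝ => σ * x + m).aemeasurable]
  have h : MemLp (fun x : ℝ => σ * x) 2 (gaussianReal 0 1) := memℒp_id_std.const_mul σ
  refine h.ae_eq (Eventually.of_forall fun x => ?_)
  show σ * x = σ * x + m - m
  ring

lemma integral_sub_const (m σ : ℝ) (hσ : 0 < σ) :
    ∫ x, (x - m) ∂(gaussianReal m (σ ^ 2).toNNReal) = 0 := by
  rw [gauss_eq_map m σ hσ,
    integral_map (by fun_prop : Measurable fun x : ℝ => σ * x + m).aemeasurable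
      ((by fun_prop : Measurable fun x : ℝ => x - m).aestronglyMeasurable)]
  simp_rw [add_sub_cancel_right]
  rw [MeasureTheory.integral_const_mul, integral_id_std, mul_zero]

lemma integral_sq_sub_const (m σ : ℝ) (hσ : 0 < σ) :
    ∫ x, (x - m) ^ 2 ∂(gaussianReal m (σ ^ 2).toNNReal) = σ ^ 2 := by
  rw [gauss_eq_map m σ hσ,
    integral_map (by fun_prop : Measurable fun x : ℝ => σ * x + m).aemeasurable
      ((by fun_prop : Measurable fun x : ℝ => (x - m) ^ 2).aestronglyMeasurable)]
  simp_rw [add_sub_cancel_right, mul_pow]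
  rw [MeasureTheory.integral_const_mul, integral_sq_std, mul_one]

end W2aux

open W2aux

/-- Squared 2-Wasserstein distance on `ℝ`: infimum of the quadratic transportation cost
over all couplings of `μ` and `ν`. -/
noncomputable def W2sq (μ ν : Measure ℝ) : ℝ≥0∞ :=
  sInf {c : ℝ≥0∞ | ∃ π : Measure (ℝ × ℝ), π.map Prod.fst = μ ∧ π.map Prod.snd = ν ∧
    c = ∫⁻ p, ENNReal.ofReal ((p.1 - p.2) ^ 2) ∂π}

/-- For Gaussian measures `N(m₁, σ₁²)` and `N(m₂, σ₂²)` on `ℝ` with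
`σ₁, σ₂ > 0`, `W₂²(μ,ν) = (m₁ - m₂)² + (σ₁ - σ₂)²`. -/
theorem W2sq_gaussianReal
    (m₁ m₂ σ₁ σ₂ : ℝ) (hσ₁ : 0 < σ₁) (hσ₂ : 0 < σ₂) :
    W2sq (gaussianReal m₁ (σ₁ ^ 2).toNNReal) (gaussianReal m₂ (σ₂ ^ 2).toNNReal) =
      ENNReal.ofReal ((m₁ - m₂) ^ 2 + (σ₁ - σ₂) ^ 2) := by
  apply le_antisymm
  · apply sInf_le
    refine ⟨(gaussianReal 0 1).map (fun x => (σ₁ * x + m₁, σ₂ * x + m₂)), ?_, ?_, Eq.symm ?_⟩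
    · rw [Measure.map_map measurable_fst (by fun_prop), gauss_eq_map m₁ σ₁ hσ₁]
      rfl
    · rw [Measure.map_map measurable_snd (by fun_prop), gauss_eq_map m₂ σ₂ hσ₂]
      rfl
    · rw [lintegral_map (f := fun p : ℝ × ℝ => ENNReal.ofReal ((p.1 - p.2) ^ 2))
        (((measurable_fst.sub measurable_snd).pow_const 2).ennreal_ofReal)
        (by fun_prop)]
      dsimp only
      have e : ∀ x : ℝ, (σ₁ * x + m₁ - (σ₂ * x + m₂)) ^ 2
          = ((σ₁ - σ₂) * x + (m₁ - m₂)) ^ 2 := fun x => by ring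
      simp_rw [e]
      rw [← ofReal_integral_eq_lintegral_ofReal (integrable_affine_sq _ _)
        (Eventually.of_forall fun x => sq_nonneg _), integral_affine_sq, add_comm]
  · refine le_sInf ?_
    rintro C ⟨J, hfst, hsnd, rfl⟩
    haveI hπ : IsProbabilityMeasure J := by
      constructor
      have h : J Set.univ = (J.map Prod.fst) Set.univ := by
        rw [Measure.map_apply measurable_fst MeasurableSet.univ, Set.preimage_univ]
      rw [h, hfst]
      exact measure_univ
    have hfsti : ∀ g : ℝ → ℝ, Measurable g →
        ∫ p, g p.1 ∂J = ∫ x, g x ∂(gaussianReal m₁ (σ₁ ^ 2).toNNReal) := fun g hg => by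
      rw [← hfst, integral_map measurable_fst.aemeasurable hg.aestronglyMeasurable]
    have hsndi : ∀ g : ℝ → ℝ, Measurable g →
        ∫ p, g p.2 ∂J = ∫ x, g x ∂(gaussianReal m₂ (σ₂ ^ 2).toNNReal) := fun g hg => by
      rw [← hsnd, integral_map measurable_snd.aemeasurable hg.aestronglyMeasurable]
    have hiX : ∫ p, (p.1 - m₁) ∂J = 0 := by
      rw [hfsti (fun x => x - m₁) (by fun_prop)]; exact integral_sub_const m₁ σ₁ hσ₁
    have hiY : ∫ p, (p.2 - m₂) ∂J = 0 := by
      rw [hsndi (fun x => x - m₂) (by fun_prop)]; exact integral_sub_const m₂ σ₂ hσ₂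
    have hiX2 : ∫ p, (p.1 - m₁) ^ 2 ∂J = σ₁ ^ 2 := by
      rw [hfsti (fun x => (x - m₁) ^ 2) (by fun_prop)]; exact integral_sq_sub_const m₁ σ₁ hσ₁
    have hiY2 : ∫ p, (p.2 - m₂) ^ 2 ∂J = σ₂ ^ 2 := by
      rw [hsndi (fun x => (x - m₂) ^ 2) (by fun_prop)]; exact integral_sq_sub_const m₂ σ₂ hσ₂
    have hX2 : MemLp (fun p : ℝ × ℝ => p.1 - m₁) 2 J := by
      have h : MemLp (fun x : ℝ => x - m₁) 2 (J.map Prod.fst) := by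
        rw [hfst]; exact memℒp_sub_const m₁ σ₁ hσ₁
      exact (memLp_map_measure_iff
        ((by fun_prop : Measurable fun x : ℝ => x - m₁).aestronglyMeasurable)
        measurable_fst.aemeasurable).1 h
    have hY2 : MemLp (fun p : ℝ × ℝ => p.2 - m₂) 2 J := by
      have h : MemLp (fun x : ℝ => x - m₂) 2 (J.map Prod.snd) := by
        rw [hsnd]; exact memℒp_sub_const m₂ σ₂ hσ₂
      exact (memLp_map_measure_iff
        ((by fun_prop : Measurable fun x : ℝ => x - m₂).aestronglyMeasurable)
        measurable_snd.aemeasurable).1 h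
    have iX : Integrable (fun p : ℝ × ℝ => p.1 - m₁) J := hX2.integrable one_le_two
    have iY : Integrable (fun p : ℝ × ℝ => p.2 - m₂) J := hY2.integrable one_le_two
    have iX2 : Integrable (fun p : ℝ × ℝ => (p.1 - m₁) ^ 2) J :=
      (memLp_two_iff_integrable_sq hX2.aestronglyMeasurable).1 hX2
    have iY2 : Integrable (fun p : ℝ × ℝ => (p.2 - m₂) ^ 2) J :=
      (memLp_two_iff_integrable_sq hY2.aestronglyMeasurable).1 hY2
    have iXY : Integrable (fun p : ℝ × ℝ => (p.1 - m₁) * (p.2 - m₂)) J := by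
      have hg : Integrable (fun p : ℝ × ℝ => 2⁻¹ * ((p.1 - m₁) ^ 2 + (p.2 - m₂) ^ 2)) J :=
        (iX2.add iY2).const_mul _
      refine hg.mono'
        ((by fun_prop : Measurable fun p : ℝ × ℝ => (p.1 - m₁) * (p.2 - m₂)).aestronglyMeasurable)
        (Eventually.of_forall fun p => ?_)
      rw [Real.norm_eq_abs, abs_mul]
      nlinarith [sq_nonneg (|p.1 - m₁| - |p.2 - m₂|), sq_abs (p.1 - m₁), sq_abs (p.2 - m₂),
        abs_nonneg (p.1 - m₁), abs_nonneg (p.2 - m₂)]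
    have hCS : ∫ p, (p.1 - m₁) * (p.2 - m₂) ∂J ≤ σ₁ * σ₂ := by
      have habs : Integrable (fun p : ℝ × ℝ => |p.1 - m₁| * |p.2 - m₂|) J := by
        refine iXY.abs.congr (Eventually.of_forall fun p => ?_)
        exact abs_mul _ _
      have h1 : ∫ p, (p.1 - m₁) * (p.2 - m₂) ∂J ≤ ∫ p, |p.1 - m₁| * |p.2 - m₂| ∂J := by
        refine integral_mono iXY habs fun p => ?_
        rw [← abs_mul]; exact le_abs_self _
      have hfm : MemLp (fun p : ℝ × ℝ => |p.1 - m₁|) (ENNReal.ofReal 2) J := by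
        rw [ENNReal.ofReal_ofNat]
        simpa [Real.norm_eq_abs] using hX2.norm
      have hgm : MemLp (fun p : ℝ × ℝ => |p.2 - m₂|) (ENNReal.ofReal 2) J := by
        rw [ENNReal.ofReal_ofNat]
        simpa [Real.norm_eq_abs] using hY2.norm
      have h2 := integral_mul_le_Lp_mul_Lq_of_nonneg
        Real.HolderConjugate.two_two
        (Eventually.of_forall fun p : ℝ × ℝ => abs_nonneg (p.1 - m₁))
        (Eventually.of_forall fun p : ℝ × ℝ => abs_nonneg (p.2 - m₂)) hfm hgm
      have e2 : ∀ y : ℝ, |y| ^ (2:ℝ) = y ^ 2 := fun y => by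
        rw [show (2:ℝ) = ((2:ℕ):ℝ) by norm_num, Real.rpow_natCast, sq_abs]
      simp_rw [e2] at h2
      rw [hiX2, hiY2] at h2
      have e3 : ∀ s : ℝ, 0 < s → (s ^ 2) ^ ((1:ℝ)/2) = s := fun s hs => by
        rw [show s ^ 2 = s ^ ((2:ℕ):ℝ) from (Real.rpow_natCast s 2).symm,
          ← Real.rpow_mul hs.le]
        norm_num
      rw [e3 σ₁ hσ₁, e3 σ₂ hσ₂] at h2
      exact h1.trans h2
    have hI1 : Integrable (fun p : ℝ × ℝ => (p.1 - m₁) ^ 2 + (p.2 - m₂) ^ 2) J := iX2.add iY2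
    have hI2 : Integrable
        (fun p : ℝ × ℝ => (p.1 - m₁) ^ 2 + (p.2 - m₂) ^ 2 + (m₁ - m₂) ^ 2) J :=
      hI1.add (integrable_const _)
    have hI3 : Integrable (fun p : ℝ × ℝ => 2 * ((p.1 - m₁) * (p.2 - m₂))) J := iXY.const_mul 2
    have hI4 : Integrable (fun p : ℝ × ℝ =>
        (p.1 - m₁) ^ 2 + (p.2 - m₂) ^ 2 + (m₁ - m₂) ^ 2 - 2 * ((p.1 - m₁) * (p.2 - m₂))) J :=
      hI2.sub hI3
    have hI5 : Integrable (fun p : ℝ × ℝ => 2 * (m₁ - m₂) * (p.1 - m₁)) J := iX.const_mul _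
    have hI6 : Integrable (fun p : ℝ × ℝ => 2 * (m₁ - m₂) * (p.2 - m₂)) J := iY.const_mul _
    have hI7 : Integrable
        (fun p : ℝ × ℝ => 2 * (m₁ - m₂) * (p.1 - m₁) - 2 * (m₁ - m₂) * (p.2 - m₂)) J :=
      hI5.sub hI6
    have hint : Integrable (fun p : ℝ × ℝ => (p.1 - p.2) ^ 2) J := by
      refine (hI4.add hI7).congr (Eventually.of_forall fun p => ?_)
      simp only [Pi.add_apply]
      ring
    have hval : ∫ p, (p.1 - p.2) ^ 2 ∂J
        = σ₁ ^ 2 + σ₂ ^ 2 + (m₁ - m₂) ^ 2 - 2 * (∫ p, (p.1 - m₁) * (p.2 - m₂) ∂J) := by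
      have e : (fun p : ℝ × ℝ => (p.1 - p.2) ^ 2) = fun p : ℝ × ℝ =>
          (p.1 - m₁) ^ 2 + (p.2 - m₂) ^ 2 + (m₁ - m₂) ^ 2 - 2 * ((p.1 - m₁) * (p.2 - m₂))
            + (2 * (m₁ - m₂) * (p.1 - m₁) - 2 * (m₁ - m₂) * (p.2 - m₂)) := by
        ext p; ring
      rw [e, integral_add hI4 hI7, integral_sub hI2 hI3, integral_add hI1 (integrable_const _),
        integral_add iX2 iY2, integral_sub hI5 hI6, MeasureTheory.integral_const_mul,
        MeasureTheory.integral_const_mul, MeasureTheory.integral_const_mul,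
        hiX2, hiY2, hiX, hiY, MeasureTheory.integral_const]
      simp only [measure_univ, probReal_univ, ENNReal.toReal_one, smul_eq_mul, one_mul]
      ring
    have hnn : 0 ≤ᵐ[J] fun p : ℝ × ℝ => (p.1 - p.2) ^ 2 :=
      Eventually.of_forall fun p => sq_nonneg _
    refine le_trans (ENNReal.ofReal_le_ofReal ?_)
      (le_of_eq (ofReal_integral_eq_lintegral_ofReal hint hnn))
    rw [hval]
    nlinarith [hCS]
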